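/- arXiv:1710.07178 — 4 statements merged into one kernel-verified Lean document; each statement's English description precedes it below -/
import Mathlib

section
/- The (n+1)-extent of the closed unit ball in ℝⁿ equals √(2(n+1)/n); that is, the maximum over (n+1)-tuples of points in the closed unit ball of the average of the pairwise Euclidean distances (with binomial(n+1,2) pairs) equals √(2(n+1)/n). -/
open Finset

/-- Sum of pairwise distances over the `q.choose 2` pairs `i < j`. -/
noncomputable def pairSum {q : ℕ} {X : Type*} [PseudoMetricSpace X] (z : Fin q → X) : ℝ :=
  ∑ i : Fin q, ∑ j ∈ Finset.univ.filter (fun j => i < j), dist (z i) (z j)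

lemma sum_pairs {q : ℕ} {M : Type*} [AddCommMonoid M] (f : Fin q → Fin q → M) :
    ∑ i : Fin q, ∑ j ∈ Finset.univ.filter (fun j => i < j), f i j
      = ∑ p ∈ Finset.univ.filter (fun p : Fin q × Fin q => p.1 < p.2), f p.1 p.2 := by
  rw [Finset.sum_filter, Fintype.sum_prod_type]
  simp [Finset.sum_filter]

lemma card_pairs (q : ℕ) :
    (Finset.univ.filter (fun p : Fin q × Fin q => p.1 < p.2)).card = q.choose 2 := by
  classical
  rw [Finset.card_eq_sum_ones, ← sum_pairs (fun (_ _ : Fin q) => (1:ℕ))]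
  simp only [Finset.sum_const, smul_eq_mul, mul_one]
  have h2 : ∀ i : Fin q, (Finset.univ.filter (fun j : Fin q => i < j)).card = q - 1 - i := by
    intro i
    rw [Finset.filter_lt_eq_Ioi, Fin.card_Ioi]
  simp only [h2]
  rw [Fin.sum_univ_eq_sum_range (fun k => q - 1 - k)]
  rw [Finset.sum_range_reflect (fun j => j) q]
  rw [Finset.sum_range_id, Nat.choose_two_right]

lemma double_sum {q : ℕ} (f : Fin q → Fin q → ℝ) (hsymm : ∀ i j, f i j = f j i)
    (hdiag : ∀ i, f i i = 0) :
    2 * (∑ i : Fin q, ∑ j ∈ Finset.univ.filter (fun j => i < j), f i j)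
      = ∑ i : Fin q, ∑ j : Fin q, f i j := by
  classical
  have key : ∀ i j : Fin q, f i j
      = (if i < j then f i j else 0) + (if j < i then f i j else 0) := by
    intro i j
    rcases lt_trichotomy i j with h | h | h
    · simp [h, lt_asymm h]
    · simp [h, hdiag]
    · simp [h, lt_asymm h]
  have hT : (∑ i : Fin q, ∑ j ∈ Finset.univ.filter (fun j => i < j), f i j)
      = ∑ i : Fin q, ∑ j : Fin q, if i < j then f i j else 0 := by
    simp [Finset.sum_filter]
  have hT' : (∑ i : Fin q, ∑ j ∈ Finset.univ.filter (fun j => i < j), f i j)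
      = ∑ i : Fin q, ∑ j : Fin q, if j < i then f i j else 0 := by
    rw [hT, Finset.sum_comm]
    refine Finset.sum_congr rfl fun i _ => Finset.sum_congr rfl fun j _ => ?_
    simp [hsymm i j]
  calc 2 * (∑ i : Fin q, ∑ j ∈ Finset.univ.filter (fun j => i < j), f i j)
      = (∑ i : Fin q, ∑ j : Fin q, if i < j then f i j else 0)
        + ∑ i : Fin q, ∑ j : Fin q, if j < i then f i j else 0 := by
        rw [← hT, ← hT']; ring
    _ = ∑ i : Fin q, ∑ j : Fin q, f i j := by
        rw [← Finset.sum_add_distrib]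
        refine Finset.sum_congr rfl fun i _ => ?_
        rw [← Finset.sum_add_distrib]
        exact (Finset.sum_congr rfl fun j _ => (key i j).symm)

lemma full_sum_bound {E : Type*} [NormedAddCommGroup E] [InnerProductSpace ℝ E]
    {q : ℕ} (P : Fin q → E) (hP : ∀ k, ‖P k‖ ≤ 1) :
    ∑ i : Fin q, ∑ j : Fin q, dist (P i) (P j) ^ 2 ≤ 2 * q ^ 2 := by
  have hexp : ∑ i : Fin q, ∑ j : Fin q, dist (P i) (P j) ^ 2
      = 2 * (q * ∑ i : Fin q, ‖P i‖ ^ 2) - 2 * ‖∑ i : Fin q, P i‖ ^ 2 := by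
    simp_rw [dist_eq_norm, norm_sub_sq_real]
    simp only [Finset.sum_add_distrib, Finset.sum_sub_distrib, Finset.sum_const,
      Finset.card_univ, Fintype.card_fin, nsmul_eq_mul, ← Finset.mul_sum, ← inner_sum,
      ← sum_inner, real_inner_self_eq_norm_sq]
    ring
  have h1 : ∑ i : Fin q, ‖P i‖ ^ 2 ≤ q := by
    calc ∑ i : Fin q, ‖P i‖ ^ 2 ≤ ∑ _i : Fin q, (1:ℝ) := by
          refine Finset.sum_le_sum fun i _ => ?_
          have := hP i
          nlinarith [norm_nonneg (P i)]
      _ = q := by simp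
  have h2 : (0:ℝ) ≤ ‖∑ i : Fin q, P i‖ ^ 2 := by positivity
  have hq : (0:ℝ) ≤ q := by positivity
  nlinarith

noncomputable def sumL (q : ℕ) : EuclideanSpace ℝ (Fin q) →ₗ[ℝ] ℝ where
  toFun x := ∑ j, x j
  map_add' x y := by simp [Finset.sum_add_distrib]
  map_smul' c x := by simp [Finset.mul_sum]

lemma finrank_ker_sumL (q : ℕ) (hq : 0 < q) :
    Module.finrank ℝ (LinearMap.ker (sumL q)) = q - 1 := by
  have hsurj : Function.Surjective (sumL q) := by
    intro r
    refine ⟨(WithLp.equiv 2 (Fin q → ℝ)).symm (fun _ => r / q), ?_⟩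
    have : ∑ _j : Fin q, r / q = r := by
      rw [Finset.sum_const, Finset.card_univ, Fintype.card_fin, nsmul_eq_mul]
      field_simp
    simpa [sumL] using this
  have h1 : Module.finrank ℝ (LinearMap.range (sumL q)) = 1 := by
    rw [LinearMap.range_eq_top.mpr hsurj, finrank_top, Module.finrank_self]
  have h2 := LinearMap.finrank_range_add_finrank_ker (sumL q)
  rw [h1, finrank_euclideanSpace_fin] at h2
  omega

noncomputable def wvec (q : ℕ) (i : Fin q) : EuclideanSpace ℝ (Fin q) :=
  (WithLp.equiv 2 (Fin q → ℝ)).symm (fun j => (if j = i then 1 else 0) - 1 / q)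

lemma wvec_mem (q : ℕ) (hq : 0 < q) (i : Fin q) : wvec q i ∈ LinearMap.ker (sumL q) := by
  have : ∑ j : Fin q, ((if j = i then (1:ℝ) else 0) - 1 / q) = 0 := by
    rw [Finset.sum_sub_distrib, Finset.sum_ite_eq' Finset.univ i (fun _ => (1:ℝ))]
    simp only [Finset.mem_univ, if_true, Finset.sum_const, Finset.card_univ,
      Fintype.card_fin, nsmul_eq_mul]
    have : (q:ℝ) ≠ 0 := by positivity
    field_simp
    ring
  simpa [sumL, wvec, LinearMap.mem_ker] using this

lemma norm_wvec (q : ℕ) (hq : 0 < q) (i : Fin q) :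
    ‖wvec q i‖ = Real.sqrt (((q:ℝ) - 1) / q) := by
  rw [EuclideanSpace.norm_eq]
  congr 1
  have hpt : ∀ j : Fin q, ‖((if j = i then (1:ℝ) else 0) - 1 / q)‖ ^ 2
      = (if j = i then 1 - 2 / (q:ℝ) else 0) + 1 / (q:ℝ) ^ 2 := by
    intro j
    rw [Real.norm_eq_abs, sq_abs]
    split <;> ring
  have hq' : (q:ℝ) ≠ 0 := by positivity
  simp only [wvec, WithLp.equiv_symm_apply, PiLp.toLp_apply, hpt]
  rw [Finset.sum_add_distrib, Finset.sum_ite_eq' Finset.univ i (fun _ => 1 - 2/(q:ℝ))]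
  simp only [Finset.mem_univ, if_true, Finset.sum_const, Finset.card_univ,
    Fintype.card_fin, nsmul_eq_mul]
  field_simp
  ring

lemma norm_wvec_sub (q : ℕ) (i j : Fin q) (hij : i ≠ j) :
    ‖wvec q i - wvec q j‖ = Real.sqrt 2 := by
  rw [EuclideanSpace.norm_eq]
  congr 1
  have hpt : ∀ k : Fin q, ‖(wvec q i - wvec q j) k‖ ^ 2
      = (if k = i then (1:ℝ) else 0) + (if k = j then 1 else 0) := by
    intro k
    have : (wvec q i - wvec q j) k
        = (if k = i then (1:ℝ) else 0) - (if k = j then 1 else 0) := by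
      simp [wvec, WithLp.equiv_symm_apply, PiLp.toLp_apply]
    rw [this, Real.norm_eq_abs, sq_abs]
    rcases eq_or_ne k i with rfl | hki <;> rcases eq_or_ne k j with rfl | hkj
    · exact absurd rfl hij
    · simp [hkj]
    · simp [hki]
    · simp [hki, hkj]
  simp only [hpt]
  rw [Finset.sum_add_distrib, Finset.sum_ite_eq' Finset.univ i (fun _ => (1:ℝ)),
    Finset.sum_ite_eq' Finset.univ j (fun _ => (1:ℝ))]
  norm_num

/-- The `(n+1)`-extent of the closed unit ball of `ℝⁿ` equals `√(2(n+1)/n)`: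
the value `√(2(n+1)/n)` is the greatest element of the set of averages
`(binomial(n+1,2))⁻¹ Σ_{i<j} |P_i - P_j|` over `(n+1)`-tuples in the closed unit ball. -/
theorem extent_unit_ball (n : ℕ) (hn : 1 ≤ n) :
    IsGreatest
      {s : ℝ | ∃ P : Fin (n + 1) → EuclideanSpace ℝ (Fin n),
          (∀ k, ‖P k‖ ≤ 1) ∧ s = ((n + 1).choose 2 : ℝ)⁻¹ * pairSum P}
      (Real.sqrt (2 * (n + 1) / n)) := by
  have hn' : (0:ℝ) < n := by exact_mod_cast hn
  constructor
  · -- membership: the regular simplex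
    have hq : 0 < n + 1 := Nat.succ_pos n
    set V := LinearMap.ker (sumL (n+1)) with hV
    have hfr : Module.finrank ℝ V = n := by rw [hV, finrank_ker_sumL (n+1) hq]; omega
    let B : OrthonormalBasis (Fin n) ℝ V := (stdOrthonormalBasis ℝ V).reindex (finCongr hfr)
    set c : ℝ := Real.sqrt (((n:ℝ)+1)/n) with hc
    have hc0 : 0 ≤ c := Real.sqrt_nonneg _
    let Q : Fin (n+1) → V := fun k => ⟨c • wvec (n+1) k,
      Submodule.smul_mem _ _ (wvec_mem _ hq k)⟩
    refine ⟨fun k => B.repr (Q k), ?_, ?_⟩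
    · intro k
      rw [B.repr.norm_map]
      have h1 : ‖Q k‖ = ‖c • wvec (n+1) k‖ := rfl
      rw [h1, norm_smul, norm_wvec _ hq, Real.norm_eq_abs, abs_of_nonneg hc0, hc,
        ← Real.sqrt_mul (by positivity)]
      have : ((n:ℝ)+1)/n * ((((n+1:ℕ)):ℝ) - 1) / ((n+1:ℕ):ℝ) = 1 := by
        push_cast; field_simp
        ring
      rw [← mul_div_assoc, this, Real.sqrt_one]
    · have hdist : ∀ i j : Fin (n+1), i ≠ j →
          dist (B.repr (Q i)) (B.repr (Q j)) = Real.sqrt (2 * ((n:ℝ)+1) / n) := by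
        intro i j hij
        rw [B.repr.dist_map, Subtype.dist_eq, dist_eq_norm]
        have h2 : (Q i : EuclideanSpace ℝ (Fin (n+1))) - (Q j : EuclideanSpace ℝ (Fin (n+1)))
            = c • (wvec (n+1) i - wvec (n+1) j) := by
          simp [Q, smul_sub]
        rw [h2, norm_smul, norm_wvec_sub _ _ _ hij, Real.norm_eq_abs, abs_of_nonneg hc0, hc,
          ← Real.sqrt_mul (by positivity)]
        congr 1
        ring
      have hN0 : ((n+1).choose 2 : ℝ) ≠ 0 := by
        have : 0 < (n+1).choose 2 := Nat.choose_pos (by omega)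
        positivity
      rw [pairSum, sum_pairs]
      rw [Finset.sum_congr rfl (fun p hp =>
        hdist p.1 p.2 (ne_of_lt (Finset.mem_filter.mp hp).2))]
      rw [Finset.sum_const, card_pairs, nsmul_eq_mul, ← mul_assoc, inv_mul_cancel₀ hN0,
        one_mul]
  · -- upper bound
    rintro s ⟨P, hP, rfl⟩
    have hN : ((n + 1).choose 2 : ℝ) = ((n:ℝ) + 1) * n / 2 := by
      rw [Nat.cast_choose_two]; push_cast; ring
    have hNpos : (0:ℝ) < ((n + 1).choose 2 : ℝ) := by rw [hN]; positivity
    set S := pairSum P with hS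
    have hS0 : 0 ≤ S := by
      rw [hS, pairSum]
      exact Finset.sum_nonneg fun i _ => Finset.sum_nonneg fun j _ => dist_nonneg
    set T2 : ℝ := ∑ i : Fin (n+1), ∑ j ∈ Finset.univ.filter (fun j => i < j),
        dist (P i) (P j) ^ 2 with hT2
    have hCS : S ^ 2 ≤ (((n+1).choose 2 : ℕ) : ℝ) * T2 := by
      rw [hS, pairSum, sum_pairs, hT2, sum_pairs]
      have := sq_sum_le_card_mul_sum_sq
        (s := Finset.univ.filter (fun p : Fin (n+1) × Fin (n+1) => p.1 < p.2))
        (f := fun p => dist (P p.1) (P p.2))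
      rwa [card_pairs] at this
    have hhalf : T2 ≤ ((n:ℝ) + 1) ^ 2 := by
      have hdbl := double_sum (fun i j => dist (P i) (P j) ^ 2)
        (fun i j => by rw [dist_comm]) (fun i => by simp)
      have hfull := full_sum_bound P hP
      rw [← hT2] at hdbl
      push_cast at hfull
      nlinarith
    have hsq : S ^ 2 ≤ ((n+1).choose 2 : ℝ) * ((n:ℝ)+1) ^ 2 := by nlinarith
    rw [Real.le_sqrt (by positivity) (by positivity), mul_pow, inv_pow,
      inv_mul_le_iff₀ (by positivity : (0:ℝ) < ((n+1).choose 2:ℝ)^2)]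
    have heq : 2*((n:ℝ)+1)/n * ((n+1).choose 2:ℝ)^2 = ((n+1).choose 2:ℝ) * ((n:ℝ)+1)^2 := by
      rw [hN]; field_simp
    calc S ^ 2 ≤ ((n+1).choose 2 : ℝ) * ((n:ℝ)+1)^2 := hsq
      _ = 2*((n:ℝ)+1)/n * ((n+1).choose 2:ℝ)^2 := heq.symm
      _ = ((n+1).choose 2:ℝ)^2 * (2*((n:ℝ)+1)/n) := by ring
end

section
/- For any n+1 points P₁,…,P_{n+1} in the closed unit ball of ℝⁿ, the sum Σ_{1≤k<j≤n+1} |P_k − P_j| is at most √(n(n+1)³/2), i.e. binomial(n+1,2)·√(2(n+1)/n). -/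
open Finset

private theorem tri_swap' {n : ℕ} (f : Fin (n+1) → Fin (n+1) → ℝ) :
    ∑ i, ∑ j ∈ Ioi i, f i j = ∑ i, ∑ j ∈ Iio i, f j i := by
  rw [Finset.sum_sigma', Finset.sum_sigma']
  refine Finset.sum_nbij' (fun p => ⟨p.2, p.1⟩) (fun p => ⟨p.2, p.1⟩) ?_ ?_ ?_ ?_ ?_ <;> simp

private theorem two_tri_le' {n : ℕ} (d : Fin (n+1) → Fin (n+1) → ℝ)
    (hnn : ∀ i j, 0 ≤ d i j) (hsym : ∀ i j, d j i = d i j) :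
    2 * (∑ i, ∑ j ∈ Ioi i, d i j) ≤ ∑ i, ∑ j, d i j := by
  have h1 : ∑ i, ∑ j ∈ Iio i, d j i = ∑ i, ∑ j ∈ Ioi i, d i j := (tri_swap' d).symm
  have h2 : ∀ i : Fin (n+1), ∑ j ∈ Ioi i, d i j + ∑ j ∈ Iio i, d i j ≤ ∑ j, d i j := by
    intro i
    rw [← Finset.sum_union (by simp [Finset.disjoint_left]; omega)]
    exact Finset.sum_le_sum_of_subset_of_nonneg (Finset.subset_univ _) fun j _ _ => hnn i j
  calc 2 * (∑ i, ∑ j ∈ Ioi i, d i j)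
      = ∑ i, ∑ j ∈ Ioi i, d i j + ∑ i, ∑ j ∈ Iio i, d j i := by rw [h1]; ring
    _ = ∑ i, (∑ j ∈ Ioi i, d i j + ∑ j ∈ Iio i, d i j) := by
        rw [← Finset.sum_add_distrib]
        exact Finset.sum_congr rfl fun i _ => by
          congr 1
          exact Finset.sum_congr rfl fun j _ => hsym i j
    _ ≤ ∑ i, ∑ j, d i j := Finset.sum_le_sum fun i _ => h2 i

private theorem card_sum' (n : ℕ) :
    ∑ k : Fin (n+1), ((Finset.Ioi k).card) = n * (n+1) / 2 := by
  simp only [Fin.card_Ioi]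
  rw [Fin.sum_univ_eq_sum_range]
  simp only [Nat.add_sub_cancel]
  have h : ∑ j ∈ range (n+1), (n - j) = ∑ j ∈ range (n+1), j := by
    have := Finset.sum_range_reflect (fun j => j) (n+1)
    simpa using this
  have h2 : (∑ i ∈ range (n+1), i) * 2 = n * (n+1) := by
    simpa [Nat.mul_comm] using Finset.sum_range_id_mul_two (n+1)
  omega

/-- For `n+1` points in the closed unit ball of `ℝⁿ`, the sum of pairwise distances
is at most `√(n(n+1)³/2)`. -/
theorem sum_pairwise_dist_le (n : ℕ) (hn : 1 ≤ n)
    (P : Fin (n + 1) → EuclideanSpace ℝ (Fin n)) (hP : ∀ k, ‖P k‖ ≤ 1) :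
    ∑ k : Fin (n + 1), ∑ j ∈ Finset.univ.filter (fun j => k < j), ‖P k - P j‖ ≤
      Real.sqrt (n * (n + 1) ^ 3 / 2) := by
  have hfil : ∀ k : Fin (n+1), Finset.univ.filter (fun j => k < j) = Finset.Ioi k := by
    intro k; ext j; simp
  simp only [hfil]
  set S := ∑ k : Fin (n+1), ∑ j ∈ Ioi k, ‖P k - P j‖ with hS
  have hS0 : 0 ≤ S := by
    apply Finset.sum_nonneg; intro k _
    exact Finset.sum_nonneg fun j _ => norm_nonneg _
  -- sum of squared distances over ordered pairs
  set T := ∑ k : Fin (n+1), ∑ j ∈ Ioi k, ‖P k - P j‖^2 with hT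
  -- full sum identity
  have full_id : ∑ i : Fin (n+1), ∑ j : Fin (n+1), ‖P i - P j‖^2
      = 2 * (n+1) * (∑ k, ‖P k‖^2) - 2 * ‖∑ k, P k‖^2 := by
    simp only [norm_sub_sq_real]
    simp only [Finset.sum_add_distrib, Finset.sum_sub_distrib, Finset.sum_const,
      Finset.card_univ, Fintype.card_fin, ← Finset.mul_sum, ← sum_inner, ← inner_sum,
      nsmul_eq_mul]
    rw [real_inner_self_eq_norm_sq]
    push_cast
    ring
  have full_le : ∑ i : Fin (n+1), ∑ j : Fin (n+1), ‖P i - P j‖^2 ≤ 2 * (n+1)^2 := by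
    rw [full_id]
    have hsum : ∑ k : Fin (n+1), ‖P k‖^2 ≤ (n+1 : ℝ) := by
      calc ∑ k : Fin (n+1), ‖P k‖^2 ≤ ∑ _k : Fin (n+1), (1:ℝ) := by
            refine Finset.sum_le_sum fun k _ => ?_
            have := hP k
            nlinarith [norm_nonneg (P k)]
        _ = (n+1 : ℝ) := by simp
    nlinarith [norm_nonneg (∑ k, P k), sq_nonneg ‖∑ k, P k‖]
  have hT_le : T ≤ (n+1:ℝ)^2 := by
    have h2T := two_tri_le' (fun i j => ‖P i - P j‖^2)
      (fun i j => by positivity)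
      (fun i j => by show ‖P j - P i‖^2 = ‖P i - P j‖^2; rw [norm_sub_rev])
    rw [← hT] at h2T
    linarith
  -- Cauchy-Schwarz
  have hcs : S^2 ≤ ((n * (n+1) / 2 : ℕ) : ℝ) * T := by
    have hsig : S = ∑ x ∈ Finset.univ.sigma (fun k : Fin (n+1) => Ioi k), ‖P x.1 - P x.2‖ := by
      rw [hS, Finset.sum_sigma]
    have hsigT : T = ∑ x ∈ Finset.univ.sigma (fun k : Fin (n+1) => Ioi k), ‖P x.1 - P x.2‖^2 := by
      rw [hT, Finset.sum_sigma]
    have hcard : (Finset.univ.sigma (fun k : Fin (n+1) => Ioi k)).card = n * (n+1) / 2 := by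
      rw [Finset.card_sigma]
      exact card_sum' n
    rw [hsig, hsigT, ← hcard]
    exact sq_sum_le_card_mul_sum_sq
  have hcardR : ((n * (n+1) / 2 : ℕ) : ℝ) = (n : ℝ) * (n+1) / 2 := by
    have he : (n * (n+1) / 2) * 2 = n * (n+1) :=
      Nat.div_mul_cancel (Nat.even_mul_succ_self n).two_dvd
    have h2 : ((n * (n+1) / 2 : ℕ) : ℝ) * 2 = (n:ℝ) * (n+1) := by
      exact_mod_cast congrArg (Nat.cast : ℕ → ℝ) he
    linarith
  have hfin : S^2 ≤ (n:ℝ) * (n+1)^3 / 2 := by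
    rw [hcardR] at hcs
    calc S^2 ≤ (n:ℝ) * (n+1) / 2 * T := hcs
      _ ≤ (n:ℝ) * (n+1) / 2 * ((n+1)^2) := by
          apply mul_le_mul_of_nonneg_left hT_le; positivity
      _ = (n:ℝ) * (n+1)^3 / 2 := by ring
  exact Real.le_sqrt_of_sq_le (by linarith [hfin])
end

section
/- If P₁,…,P_{n+1} lie in the closed unit ball of ℝⁿ and all pairwise distances are equal to √(2(n+1)/n) (i.e. they form a regular simplex realizing the (n+1)-extent of the ball), then all points lie on the unit sphere and their barycenter is the origin. -/
set_option maxHeartbeats 800000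


/-- If `n+1` points of the closed unit ball of `ℝⁿ` have all pairwise distances equal to
`√(2(n+1)/n)`, then they all lie on the unit sphere and their barycenter is the origin. -/
theorem regular_simplex_extremal (n : ℕ) (hn : 1 ≤ n)
    (P : Fin (n + 1) → EuclideanSpace ℝ (Fin n)) (hP : ∀ k, ‖P k‖ ≤ 1)
    (hdist : ∀ k j, k ≠ j → ‖P k - P j‖ = Real.sqrt (2 * (n + 1) / n)) :
    (∀ k, ‖P k‖ = 1) ∧ ((n + 1 : ℝ))⁻¹ • (∑ k : Fin (n + 1), P k) = 0 := by
  have hn0 : (0:ℝ) < n := by exact_mod_cast hn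
  set S : EuclideanSpace ℝ (Fin n) := ∑ k : Fin (n+1), P k with hS
  set T : ℝ := ∑ k : Fin (n+1), ‖P k‖^2 with hT
  have hd2 : ∀ k j : Fin (n+1), k ≠ j → ‖P k - P j‖^2 = 2*(n+1)/n := by
    intro k j h
    rw [hdist k j h, Real.sq_sqrt (by positivity)]
  have h2 : (inner ℝ S S : ℝ) = ∑ k : Fin (n+1), ∑ j : Fin (n+1),
      (inner ℝ (P k) (P j) : ℝ) := by
    rw [hS, sum_inner]
    exact Finset.sum_congr rfl fun k _ => inner_sum _ _ _
  have h1 : ∑ k : Fin (n+1), ∑ j : Fin (n+1), ‖P k - P j‖^2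
      = 2*(n+1)*T - 2*‖S‖^2 := by
    have : ∀ k j : Fin (n+1), ‖P k - P j‖^2
        = ‖P k‖^2 - 2 * (inner ℝ (P k) (P j) : ℝ) + ‖P j‖^2 := fun k j =>
      norm_sub_sq_real _ _
    simp_rw [this]
    rw [← real_inner_self_eq_norm_sq, h2]
    simp [Finset.sum_add_distrib, Finset.sum_sub_distrib, ← Finset.mul_sum,
      Finset.sum_const, Finset.card_univ, ← hT]
    ring
  have hrow : ∀ k : Fin (n+1), ∑ j : Fin (n+1), ‖P k - P j‖^2 = 2*((n:ℝ)+1) := by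
    intro k
    rw [← Finset.add_sum_erase _ _ (Finset.mem_univ k)]
    rw [Finset.sum_congr rfl (fun j hj => hd2 k j (Finset.ne_of_mem_erase hj).symm)]
    rw [Finset.sum_const, Finset.card_erase_of_mem (Finset.mem_univ k)]
    simp only [sub_self, norm_zero, Finset.card_univ, Fintype.card_fin,
      Nat.add_sub_cancel, nsmul_eq_mul, zero_pow, ne_eq, OfNat.ofNat_ne_zero,
      not_false_eq_true, zero_add]
    field_simp
  have h3 : ∑ k : Fin (n+1), ∑ j : Fin (n+1), ‖P k - P j‖^2
      = 2*((n:ℝ)+1)^2 := by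
    rw [Finset.sum_congr rfl (fun k _ => hrow k), Finset.sum_const,
      Finset.card_univ, Fintype.card_fin, nsmul_eq_mul]
    push_cast
    ring
  have key : ((n:ℝ)+1) * T - ‖S‖^2 = ((n:ℝ)+1)^2 := by
    rw [h3] at h1
    nlinarith [h1]
  have hTle : T ≤ ((n:ℝ)+1) := by
    rw [hT]
    calc ∑ k : Fin (n+1), ‖P k‖^2 ≤ ∑ _k : Fin (n+1), (1:ℝ) := by
          refine Finset.sum_le_sum fun k _ => ?_
          nlinarith [hP k, norm_nonneg (P k)]
      _ = ((n:ℝ)+1) := by simp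
  have hSnorm : ‖S‖^2 = 0 := by
    have hmul : ((n:ℝ)+1) * T ≤ ((n:ℝ)+1) * ((n:ℝ)+1) :=
      mul_le_mul_of_nonneg_left hTle (by positivity)
    nlinarith [sq_nonneg ‖S‖]
  have hS0 : S = 0 := norm_eq_zero.mp ((pow_eq_zero_iff (two_ne_zero)).mp hSnorm)
  have hTeq : T = ((n:ℝ)+1) := by
    have h' : ((n:ℝ)+1) * T = ((n:ℝ)+1) * ((n:ℝ)+1) := by nlinarith [key, hSnorm]
    exact mul_left_cancel₀ (by positivity) h'
  constructor
  · intro k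
    have hsum : ∑ j : Fin (n+1), ((1:ℝ) - ‖P j‖^2) = 0 := by
      rw [Finset.sum_sub_distrib, ← hT, hTeq]
      simp
    have hnonneg : ∀ j ∈ (Finset.univ : Finset (Fin (n+1))),
        (0:ℝ) ≤ 1 - ‖P j‖^2 := fun j _ => by nlinarith [hP j, norm_nonneg (P j)]
    have hle := Finset.single_le_sum hnonneg (Finset.mem_univ k)
    rw [hsum] at hle
    have hk : ‖P k‖^2 = 1 := by nlinarith [hP k, norm_nonneg (P k)]
    nlinarith [norm_nonneg (P k), sq_nonneg (‖P k‖ - 1), hk]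
  · rw [hS0, smul_zero]
end

section
/- Let R be an algebraic curvature tensor on ℝⁿ (a 4-linear map with the symmetries R(X,Y,Z,W) = −R(Y,X,Z,W) = R(Z,W,X,Y) and the first Bianchi identity), and let S₁,…,S_{n+1} be the vertices of a regular simplex inscribed in the unit sphere of ℝⁿ. Then Σ_{1≤k<j≤n+1} R(S_k, S_j, S_j, S_k) = ((n+1)²/(2n²)) · Scal, where Scal = Σ_{i,j} R(e_i, e_j, e_j, e_i) for any orthonormal basis (e_i). -/
open Finset
open scoped InnerProductSpace

/-- An algebraic curvature tensor on a real vector space: a 4-linear map (linearity is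
required in the first slot; together with the symmetries this gives full multilinearity)
which is antisymmetric in the first two and in the last two slots, symmetric under exchange
of the two pairs, and satisfies the first Bianchi identity. -/
structure CurvTensor (E : Type*) [AddCommGroup E] [Module ℝ E] where
  R : E → E → E → E → ℝ
  add_left : ∀ x x' y z w, R (x + x') y z w = R x y z w + R x' y z w
  smul_left : ∀ (c : ℝ) x y z w, R (c • x) y z w = c * R x y z w
  antisym_fst : ∀ x y z w, R x y z w = -R y x z w
  antisym_snd : ∀ x y z w, R x y z w = -R x y w z
  pair_symm : ∀ x y z w, R x y z w = R z w x y
  bianchi : ∀ x y z w, R x y z w + R y z x w + R z x y w = 0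

namespace CurvTensor

variable {E : Type*} [AddCommGroup E] [Module ℝ E] (T : CurvTensor E)

/-- The curvature tensor as a linear map in its first slot. -/
def lm1 (y z w : E) : E →ₗ[ℝ] ℝ where
  toFun x := T.R x y z w
  map_add' a b := T.add_left a b y z w
  map_smul' c x := T.smul_left c x y z w

lemma sum_left {ι : Type*} (s : Finset ι) (f : ι → E) (y z w : E) :
    T.R (∑ i ∈ s, f i) y z w = ∑ i ∈ s, T.R (f i) y z w :=
  map_sum (T.lm1 y z w) f s

lemma smul_last (c : ℝ) (x y z w : E) : T.R x y z (c • w) = c * T.R x y z w := by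
  rw [T.pair_symm, T.antisym_fst, T.smul_left, T.antisym_fst w z x y, T.pair_symm z w x y]
  ring

lemma sum_last {ι : Type*} (s : Finset ι) (x y z : E) (f : ι → E) :
    T.R x y z (∑ i ∈ s, f i) = ∑ i ∈ s, T.R x y z (f i) := by
  rw [T.pair_symm, T.antisym_fst, T.sum_left, ← Finset.sum_neg_distrib]
  exact Finset.sum_congr rfl fun i _ => by rw [← T.antisym_fst, ← T.pair_symm]

end CurvTensor

/-- Auxiliary: commuting a fourfold sum. -/
lemma comm4 {α β : Type*} [Fintype α] [Fintype β] (t : α → α → β → β → ℝ) :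
    ∑ a : α, ∑ b : α, ∑ k : β, ∑ j : β, t a b k j
      = ∑ k : β, ∑ j : β, ∑ a : α, ∑ b : α, t a b k j := by
  calc ∑ a : α, ∑ b : α, ∑ k : β, ∑ j : β, t a b k j
      = ∑ a : α, ∑ k : β, ∑ b : α, ∑ j : β, t a b k j :=
        Finset.sum_congr rfl fun a _ => Finset.sum_comm
    _ = ∑ k : β, ∑ a : α, ∑ b : α, ∑ j : β, t a b k j := Finset.sum_comm
    _ = ∑ k : β, ∑ a : α, ∑ j : β, ∑ b : α, t a b k j :=
        Finset.sum_congr rfl fun k _ => Finset.sum_congr rfl fun a _ => Finset.sum_comm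
    _ = ∑ k : β, ∑ j : β, ∑ a : α, ∑ b : α, t a b k j :=
        Finset.sum_congr rfl fun k _ => Finset.sum_comm

/-- Averaging an algebraic curvature tensor over the vertices of a regular simplex inscribed
in the unit sphere of `ℝⁿ` recovers the scalar curvature:
`Σ_{k<j} R(S_k,S_j,S_j,S_k) = ((n+1)²/(2n²))·Scal`, where
`Scal = Σ_{i,j} R(e_i,e_j,e_j,e_i)` for the standard orthonormal basis. -/
theorem regular_simplex_scalar_curvature (n : ℕ) (hn : 2 ≤ n)
    (T : CurvTensor (EuclideanSpace ℝ (Fin n)))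
    (S : Fin (n + 1) → EuclideanSpace ℝ (Fin n))
    (hnorm : ∀ k, ‖S k‖ = 1)
    (hinner : ∀ k j, k ≠ j → ⟪S k, S j⟫_ℝ = -1 / n) :
    ∑ k : Fin (n + 1), ∑ j ∈ Finset.univ.filter (fun j => k < j),
        T.R (S k) (S j) (S j) (S k) =
      ((n + 1 : ℝ) ^ 2 / (2 * n ^ 2)) *
        ∑ i : Fin n, ∑ j : Fin n,
          T.R (EuclideanSpace.single i 1) (EuclideanSpace.single j 1)
            (EuclideanSpace.single j 1) (EuclideanSpace.single i 1) := by
  classical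
  have hn0 : (n : ℝ) ≠ 0 := by positivity
  set e : Fin n → EuclideanSpace ℝ (Fin n) := fun i => EuclideanSpace.single i 1 with he
  set μ : ℝ := (n + 1) / n with hμ
  -- coordinate decomposition
  have decomp : ∀ x : EuclideanSpace ℝ (Fin n), x = ∑ i, x i • e i := by
    intro x
    ext j
    rw [WithLp.ofLp_sum, Finset.sum_apply]
    simp [he, EuclideanSpace.single_apply]
  -- inner product in coordinates
  have hip : ∀ k j, (∑ i, S k i * S j i) = if k = j then (1 : ℝ) else -1 / n := by
    intro k j
    have h1 : ⟪S k, S j⟫_ℝ = ∑ i, S k i * S j i := by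
      simp [PiLp.inner_apply]
      exact Finset.sum_congr rfl fun i _ => mul_comm _ _
    by_cases h : k = j
    · subst h
      rw [← h1, real_inner_self_eq_norm_sq, hnorm k]
      simp
    · rw [← h1, hinner k j h, if_neg h]
  -- the key Gram identity:  ∑ₖ (S k a)(S k b) = μ·δ_{ab}
  have hB : ∀ a b : Fin n, (∑ k, S k a * S k b) = μ * (if a = b then (1 : ℝ) else 0) := by
    have A1 : ∑ a : Fin n, ∑ b : Fin n,
        (∑ k, S k a * S k b) * (∑ k, S k a * S k b) = ((n : ℝ) + 1) ^ 2 / n := by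
      have step1 : ∀ a b : Fin n, (∑ k, S k a * S k b) * (∑ k, S k a * S k b)
          = ∑ k, ∑ j, (S k a * S j a) * (S k b * S j b) := by
        intro a b
        rw [Finset.sum_mul_sum]
        exact Finset.sum_congr rfl fun k _ => Finset.sum_congr rfl fun j _ => by ring
      calc ∑ a : Fin n, ∑ b : Fin n,
            (∑ k, S k a * S k b) * (∑ k, S k a * S k b)
          = ∑ a : Fin n, ∑ b : Fin n, ∑ k, ∑ j, (S k a * S j a) * (S k b * S j b) := by
            exact Finset.sum_congr rfl fun a _ => Finset.sum_congr rfl fun b _ => step1 a b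
        _ = ∑ k, ∑ j, ∑ a : Fin n, ∑ b : Fin n, (S k a * S j a) * (S k b * S j b) :=
            comm4 _
        _ = ∑ k, ∑ j, (∑ a, S k a * S j a) * (∑ b, S k b * S j b) := by
            refine Finset.sum_congr rfl fun k _ => Finset.sum_congr rfl fun j _ => ?_
            rw [Finset.sum_mul_sum]
        _ = ∑ k, ∑ j, (if k = j then (1:ℝ) else -1/n) * (if k = j then (1:ℝ) else -1/n) := by
            refine Finset.sum_congr rfl fun k _ => Finset.sum_congr rfl fun j _ => ?_
            rw [hip]
        _ = ∑ _k : Fin (n+1), (((n:ℝ)+1) * (1/n^2) + (1 - 1/n^2)) := by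
            refine Finset.sum_congr rfl fun k _ => ?_
            have : ∀ j : Fin (n+1),
                (if k = j then (1:ℝ) else -1/n) * (if k = j then (1:ℝ) else -1/n)
                  = 1/n^2 + if k = j then (1 - 1/n^2 : ℝ) else 0 := by
              intro j
              by_cases h : k = j <;> simp [h] <;> field_simp <;> ring
            rw [Finset.sum_congr rfl fun j _ => this j, Finset.sum_add_distrib,
              Finset.sum_const, Finset.sum_ite_eq, if_pos (Finset.mem_univ k),
              Finset.card_univ, Fintype.card_fin, nsmul_eq_mul]
            push_cast
            ring
        _ = ((n : ℝ) + 1) ^ 2 / n := by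
            rw [Finset.sum_const, Finset.card_univ, Fintype.card_fin, nsmul_eq_mul]
            push_cast
            field_simp
            ring
    have A2 : ∑ a : Fin n, ∑ b : Fin n,
        (∑ k, S k a * S k b) * (if a = b then (1:ℝ) else 0) = (n : ℝ) + 1 := by
      have : ∀ a : Fin n, ∑ b : Fin n,
          (∑ k, S k a * S k b) * (if a = b then (1:ℝ) else 0) = ∑ k, S k a * S k a := by
        intro a
        rw [Finset.sum_congr rfl fun b _ => (by rw [mul_ite, mul_one, mul_zero] :
          (∑ k, S k a * S k b) * (if a = b then (1:ℝ) else 0)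
            = if a = b then (∑ k, S k a * S k b) else 0), Finset.sum_ite_eq]
        simp
      rw [Finset.sum_congr rfl fun a _ => this a, Finset.sum_comm]
      have : ∀ k, ∑ a : Fin n, S k a * S k a = 1 := by
        intro k
        have := hip k k
        rw [if_pos rfl] at this
        exact this
      rw [Finset.sum_congr rfl fun k _ => this k, Finset.sum_const, Finset.card_univ,
        Fintype.card_fin]
      push_cast
      ring
    have A3 : ∑ a : Fin n, ∑ b : Fin n,
        (if a = b then (1:ℝ) else 0) * (if a = b then (1:ℝ) else 0) = (n : ℝ) := by
      have : ∀ a : Fin n, ∑ b : Fin n,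
          (if a = b then (1:ℝ) else 0) * (if a = b then (1:ℝ) else 0) = 1 := by
        intro a
        rw [Finset.sum_congr rfl fun b _ => (by by_cases h : a = b <;> simp [h] :
          (if a = b then (1:ℝ) else 0) * (if a = b then (1:ℝ) else 0)
            = if a = b then (1:ℝ) else 0), Finset.sum_ite_eq]
        simp
      rw [Finset.sum_congr rfl fun a _ => this a, Finset.sum_const, Finset.card_univ,
        Fintype.card_fin]
      simp
    have key : ∑ a : Fin n, ∑ b : Fin n,
        ((∑ k, S k a * S k b) - μ * (if a = b then (1:ℝ) else 0)) ^ 2 = 0 := by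
      have expand : ∀ a b : Fin n,
          ((∑ k, S k a * S k b) - μ * (if a = b then (1:ℝ) else 0)) ^ 2
            = (∑ k, S k a * S k b) * (∑ k, S k a * S k b)
              - 2 * μ * ((∑ k, S k a * S k b) * (if a = b then (1:ℝ) else 0))
              + μ ^ 2 * ((if a = b then (1:ℝ) else 0) * (if a = b then (1:ℝ) else 0)) := by
        intro a b
        ring
      calc ∑ a : Fin n, ∑ b : Fin n,
            ((∑ k, S k a * S k b) - μ * (if a = b then (1:ℝ) else 0)) ^ 2
          = (∑ a : Fin n, ∑ b : Fin n,
              (∑ k, S k a * S k b) * (∑ k, S k a * S k b))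
            - 2 * μ * (∑ a : Fin n, ∑ b : Fin n,
              (∑ k, S k a * S k b) * (if a = b then (1:ℝ) else 0))
            + μ ^ 2 * (∑ a : Fin n, ∑ b : Fin n,
              (if a = b then (1:ℝ) else 0) * (if a = b then (1:ℝ) else 0)) := by
            rw [Finset.sum_congr rfl fun a _ => Finset.sum_congr rfl fun b _ => expand a b]
            simp only [Finset.sum_add_distrib, Finset.sum_sub_distrib, Finset.mul_sum]
        _ = ((n : ℝ) + 1) ^ 2 / n - 2 * μ * ((n:ℝ) + 1) + μ ^ 2 * n := by
            rw [A1, A2, A3]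
        _ = 0 := by
            rw [hμ]
            field_simp
            ring
    intro a b
    have h1 := (Finset.sum_eq_zero_iff_of_nonneg
      (fun a _ => Finset.sum_nonneg fun b _ => sq_nonneg _)).1 key a (Finset.mem_univ a)
    have h2 := (Finset.sum_eq_zero_iff_of_nonneg
      (fun b _ => sq_nonneg _)).1 h1 b (Finset.mem_univ b)
    have := pow_eq_zero_iff (n := 2) (by norm_num) |>.1 h2
    linarith [this]
  -- expansion of R in slots 1 and 4
  have expand14 : ∀ x y z w : EuclideanSpace ℝ (Fin n),
      T.R x y z w = ∑ a, ∑ d, (x a * w d) * T.R (e a) y z (e d) := by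
    intro x y z w
    conv_lhs => rw [decomp x, decomp w]
    rw [T.sum_left]
    refine Finset.sum_congr rfl fun a _ => ?_
    rw [T.smul_left, T.sum_last, Finset.mul_sum]
    refine Finset.sum_congr rfl fun d _ => ?_
    rw [T.smul_last]
    ring
  -- averaging over slots 1 and 4
  have hC : ∀ y z : EuclideanSpace ℝ (Fin n),
      ∑ k, T.R (S k) y z (S k) = μ * ∑ a, T.R (e a) y z (e a) := by
    intro y z
    calc ∑ k, T.R (S k) y z (S k)
        = ∑ k, ∑ a, ∑ d, (S k a * S k d) * T.R (e a) y z (e d) :=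
          Finset.sum_congr rfl fun k _ => expand14 _ _ _ _
      _ = ∑ a, ∑ k, ∑ d, (S k a * S k d) * T.R (e a) y z (e d) := Finset.sum_comm
      _ = ∑ a, ∑ d, ∑ k, (S k a * S k d) * T.R (e a) y z (e d) :=
          Finset.sum_congr rfl fun a _ => Finset.sum_comm
      _ = ∑ a, ∑ d, (∑ k, S k a * S k d) * T.R (e a) y z (e d) := by
          refine Finset.sum_congr rfl fun a _ => Finset.sum_congr rfl fun d _ => ?_
          rw [Finset.sum_mul]
      _ = ∑ a, ∑ d, (μ * if a = d then (1:ℝ) else 0) * T.R (e a) y z (e d) := by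
          refine Finset.sum_congr rfl fun a _ => Finset.sum_congr rfl fun d _ => ?_
          rw [hB]
      _ = μ * ∑ a, T.R (e a) y z (e a) := by
          rw [Finset.mul_sum]
          refine Finset.sum_congr rfl fun a _ => ?_
          rw [Finset.sum_congr rfl fun d _ => (by by_cases h : a = d <;> simp [h] :
            (μ * if a = d then (1:ℝ) else 0) * T.R (e a) y z (e d)
              = if a = d then μ * T.R (e a) y z (e d) else 0), Finset.sum_ite_eq]
          simp
  -- averaging over slots 2 and 3
  have hD : ∀ x w : EuclideanSpace ℝ (Fin n),
      ∑ j, T.R x (S j) (S j) w = μ * ∑ b, T.R x (e b) (e b) w := by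
    intro x w
    calc ∑ j, T.R x (S j) (S j) w
        = ∑ j, T.R (S j) w x (S j) :=
          Finset.sum_congr rfl fun j _ => T.pair_symm _ _ _ _
      _ = μ * ∑ b, T.R (e b) w x (e b) := hC w x
      _ = μ * ∑ b, T.R x (e b) (e b) w := by
          rw [Finset.sum_congr rfl fun b _ => (T.pair_symm (e b) w x (e b))]
  -- the full double sum
  set f : Fin (n+1) → Fin (n+1) → ℝ := fun k j => T.R (S k) (S j) (S j) (S k) with hf
  have total : ∑ k, ∑ j, f k j
      = μ ^ 2 * ∑ i : Fin n, ∑ j : Fin n, T.R (e i) (e j) (e j) (e i) := by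
    calc ∑ k, ∑ j, f k j
        = ∑ k, (μ * ∑ b, T.R (S k) (e b) (e b) (S k)) :=
          Finset.sum_congr rfl fun k _ => hD _ _
      _ = μ * ∑ b, ∑ k, T.R (S k) (e b) (e b) (S k) := by
          rw [← Finset.mul_sum, Finset.sum_comm]
      _ = μ * ∑ b, (μ * ∑ a, T.R (e a) (e b) (e b) (e a)) := by
          rw [Finset.sum_congr rfl fun b _ => hC (e b) (e b)]
      _ = μ ^ 2 * ∑ a, ∑ b, T.R (e a) (e b) (e b) (e a) := by
          rw [← Finset.mul_sum, Finset.sum_comm]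
          ring
  -- symmetry and vanishing diagonal
  have hsymm : ∀ k j, f k j = f j k := fun k j => T.pair_symm _ _ _ _
  have hdiag : ∀ k, f k k = 0 := by
    intro k
    have := T.antisym_fst (S k) (S k) (S k) (S k)
    simp only [hf] at *
    linarith
  -- splitting the double sum
  have cross : ∑ k, ∑ j ∈ Finset.univ.filter (fun j => j < k), f k j
      = ∑ k, ∑ j ∈ Finset.univ.filter (fun j => k < j), f k j := by
    rw [Finset.sum_comm' (s := Finset.univ) (t := fun k => Finset.univ.filter (fun j => j < k))
      (t' := Finset.univ) (s' := fun j => Finset.univ.filter (fun k => j < k))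
      (by intro k j; simp)]
    exact Finset.sum_congr rfl fun j _ => Finset.sum_congr rfl fun k _ => hsymm k j
  have split : ∑ k, ∑ j, f k j
      = 2 * ∑ k, ∑ j ∈ Finset.univ.filter (fun j => k < j), f k j := by
    have hsplit : ∀ k : Fin (n+1), ∑ j, f k j
        = (∑ j ∈ Finset.univ.filter (fun j => k < j), f k j)
          + (∑ j ∈ Finset.univ.filter (fun j => j < k), f k j) := by
      intro k
      rw [← Finset.sum_filter_add_sum_filter_not Finset.univ (fun j => k < j) (f k)]
      congr 1
      have hset : Finset.univ.filter (fun j => ¬ k < j)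
          = insert k (Finset.univ.filter (fun j => j < k)) := by
        ext j
        simp only [Finset.mem_filter, Finset.mem_univ, true_and, Finset.mem_insert, not_lt]
        constructor
        · intro h
          rcases lt_or_eq_of_le h with h | h
          · exact Or.inr h
          · exact Or.inl h
        · rintro (h | h)
          · exact le_of_eq h
          · exact le_of_lt h
      rw [hset, Finset.sum_insert (by simp), hdiag k, zero_add]
    rw [Finset.sum_congr rfl fun k _ => hsplit k, Finset.sum_add_distrib, cross]
    ring
  have final : ∑ k, ∑ j ∈ Finset.univ.filter (fun j => k < j), f k j
      = (μ ^ 2 / 2) * ∑ i : Fin n, ∑ j : Fin n, T.R (e i) (e j) (e j) (e i) := by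
    have := split.symm.trans total
    linarith
  rw [show (∑ k : Fin (n + 1), ∑ j ∈ Finset.univ.filter (fun j => k < j),
      T.R (S k) (S j) (S j) (S k)) = ∑ k, ∑ j ∈ Finset.univ.filter (fun j => k < j), f k j
    from rfl, final]
  have : μ ^ 2 / 2 = ((n : ℝ) + 1) ^ 2 / (2 * (n : ℝ) ^ 2) := by
    rw [hμ]
    field_simp
  rw [this]
end
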